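/- Consider the generalized fair learning problem: minimize E_{(x,s)∼P_{X,S}}[ TV(Q_{Ŷ|X=x,S=s}, P_{Y|X=x,S=s}) ] over conditional distributions Q_{Ŷ|X,S} subject to ρ_TV(Ŷ, S) ≤ ε, where ρ_TV(Ŷ, S) = E_{s∼P_S}[ TV(P_{Ŷ|S=s}, P_{Ŷ}) ] and Ŷ is distributed according to Q_{Ŷ|X,S} · P_{X,S}. Suppose s_max ∈ 𝒮 satisfies P_S(s_max) = 1/2 + δ for some δ > 0, and there exist functions φ_L, φ_U : 𝒳 × 𝒴 → ℝ such that φ_L(x,y) ≤ P(X=x | Y=y, S=s) / P(X=x | S=s) ≤ φ_U(x,y) for all x ∈ 𝒳, y ∈ 𝒴, s ∈ 𝒮. Define Δ(x,y) = φ_U(x,y) − φ_L(x,y), and assume ε/2 ≥ E_{x∼P_X, y∼P_{Y|S=s_max}}[Δ(x,y)] (expectation under the product of the marginal of X and the conditional of Y given S=s_max). Then for any optimal solution Q*, the induced Ŷ satisfies: E_{s∼P_S}[ TV(P_{Ŷ|S=s}, P_{Y|S=s_max}) ] ≤ 2ε · (1 + 1/(2δ)). -/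

import Mathlib

open Finset

noncomputable section

variable {𝒳 𝒴 𝒮 : Type*} [Fintype 𝒳] [Fintype 𝒴] [Fintype 𝒮]

/-- Total variation distance between two finitely supported distributions on `𝒴`,
`TV(p, q) = (1/2) ∑ y, |p y - q y|`. -/
def TV (p q : 𝒴 → ℝ) : ℝ := (1 / 2) * ∑ y, |p y - q y|

/-- Marginal distribution of `(X, S)` under the joint `P` of `(X, Y, S)`. -/
def margXS (P : 𝒳 → 𝒴 → 𝒮 → ℝ) (x : 𝒳) (s : 𝒮) : ℝ := ∑ y, P x y s

/-- Marginal distribution of `(Y, S)`. -/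
def margYS (P : 𝒳 → 𝒴 → 𝒮 → ℝ) (y : 𝒴) (s : 𝒮) : ℝ := ∑ x, P x y s

/-- Marginal distribution of `S`. -/
def margS (P : 𝒳 → 𝒴 → 𝒮 → ℝ) (s : 𝒮) : ℝ := ∑ x, margXS P x s

/-- Marginal distribution of `X`. -/
def margX (P : 𝒳 → 𝒴 → 𝒮 → ℝ) (x : 𝒳) : ℝ := ∑ s, margXS P x s

/-- Conditional distribution of `Y` given `X = x, S = s`. -/
def condYXS (P : 𝒳 → 𝒴 → 𝒮 → ℝ) (x : 𝒳) (s : 𝒮) (y : 𝒴) : ℝ := P x y s / margXS P x s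

/-- Conditional distribution of `Y` given `S = s`. -/
def condYS (P : 𝒳 → 𝒴 → 𝒮 → ℝ) (s : 𝒮) (y : 𝒴) : ℝ := margYS P y s / margS P s

/-- The ratio `P(X=x | Y=y, S=s) / P(X=x | S=s)`. -/
def condRatio (P : 𝒳 → 𝒴 → 𝒮 → ℝ) (x : 𝒳) (y : 𝒴) (s : 𝒮) : ℝ :=
  (P x y s / margYS P y s) / (margXS P x s / margS P s)

/-- A conditional distribution `Q`: for every `(x, s)`, `Q x s` is a probability
distribution on labels. -/
def IsRule (Q : 𝒳 → 𝒮 → 𝒴 → ℝ) : Prop :=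
  (∀ x s y, 0 ≤ Q x s y) ∧ ∀ x s, ∑ y, Q x s y = 1

/-- The generalized objective: `E_{(x,s)∼P_{X,S}}[TV(Q_{Ŷ|X=x,S=s}, P_{Y|X=x,S=s})]`. -/
def objective (P : 𝒳 → 𝒴 → 𝒮 → ℝ) (Q : 𝒳 → 𝒮 → 𝒴 → ℝ) : ℝ :=
  ∑ x, ∑ s, margXS P x s * TV (Q x s) (condYXS P x s)

/-- Joint distribution of `(Ŷ, S)` induced by `Q · P_{X,S}`. -/
def jointYhatS (P : 𝒳 → 𝒴 → 𝒮 → ℝ) (Q : 𝒳 → 𝒮 → 𝒴 → ℝ) (yh : 𝒴) (s : 𝒮) : ℝ :=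
  ∑ x, margXS P x s * Q x s yh

/-- Marginal distribution of the prediction `Ŷ`. -/
def margYhat (P : 𝒳 → 𝒴 → 𝒮 → ℝ) (Q : 𝒳 → 𝒮 → 𝒴 → ℝ) (yh : 𝒴) : ℝ :=
  ∑ s, jointYhatS P Q yh s

/-- Conditional distribution of the prediction `Ŷ` given `S = s`. -/
def condYhatS (P : 𝒳 → 𝒴 → 𝒮 → ℝ) (Q : 𝒳 → 𝒮 → 𝒴 → ℝ) (s : 𝒮) (yh : 𝒴) : ℝ :=
  jointYhatS P Q yh s / margS P s

/-- The TV-based dependence measure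
`ρ_TV(Ŷ, S) = E_{s∼P_S}[TV(P_{Ŷ|S=s}, P_Ŷ)]`. -/
def rhoTV (P : 𝒳 → 𝒴 → 𝒮 → ℝ) (Q : 𝒳 → 𝒮 → 𝒴 → ℝ) : ℝ :=
  ∑ s, margS P s * TV (condYhatS P Q s) (margYhat P Q)

/-! ### Auxiliary lemmas about total variation -/

lemma TV_nonneg (p q : 𝒴 → ℝ) : 0 ≤ TV p q := by
  unfold TV; positivity

lemma TV_self (p : 𝒴 → ℝ) : TV p p = 0 := by simp [TV]

lemma TV_symm (p q : 𝒴 → ℝ) : TV p q = TV q p := by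
  unfold TV
  congr 1
  exact Finset.sum_congr rfl fun y _ => abs_sub_comm _ _

lemma TV_triangle (p q r : 𝒴 → ℝ) : TV p r ≤ TV p q + TV q r := by
  unfold TV
  have h := Finset.sum_le_sum (fun y (_ : y ∈ (univ : Finset 𝒴)) => abs_sub_le (p y) (q y) (r y))
  rw [Finset.sum_add_distrib] at h
  linarith

lemma TV_smul (a : ℝ) (ha : 0 ≤ a) (p q : 𝒴 → ℝ) :
    TV (fun y => a * p y) (fun y => a * q y) = a * TV p q := by
  unfold TV
  have h : ∀ y, |a * p y - a * q y| = a * |p y - q y| := fun y => by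
    rw [← mul_sub, abs_mul, abs_of_nonneg ha]
  simp only [h]
  rw [← Finset.mul_sum]
  ring

lemma TV_mix {ι : Type*} [Fintype ι] (a : ι → ℝ) (ha : ∀ i, 0 ≤ a i)
    (p q : ι → 𝒴 → ℝ) :
    TV (fun y => ∑ i, a i * p i y) (fun y => ∑ i, a i * q i y)
      ≤ ∑ i, a i * TV (p i) (q i) := by
  unfold TV
  have h1 : ∀ y, |∑ i, a i * p i y - ∑ i, a i * q i y| ≤ ∑ i, a i * |p i y - q i y| := by
    intro y
    rw [← Finset.sum_sub_distrib]
    refine (Finset.abs_sum_le_sum_abs _ _).trans ?_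
    refine Finset.sum_le_sum fun i _ => ?_
    rw [← mul_sub, abs_mul, abs_of_nonneg (ha i)]
  calc (1/2 : ℝ) * ∑ y, |∑ i, a i * p i y - ∑ i, a i * q i y|
      ≤ (1/2) * ∑ y, ∑ i, a i * |p i y - q i y| := by
        have := Finset.sum_le_sum (fun y (_ : y ∈ (univ : Finset 𝒴)) => h1 y)
        linarith
    _ = ∑ i, a i * ((1/2) * ∑ y, |p i y - q i y|) := by
        rw [Finset.sum_comm, Finset.mul_sum]
        exact Finset.sum_congr rfl fun i _ => by rw [← Finset.mul_sum]; ring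

/-- Scaling a TV of conditional prediction distributions by the mass of `s` turns it
into an (unnormalized) TV of joint distributions. -/
lemma margS_mul_TV_condYhatS (P : 𝒳 → 𝒴 → 𝒮 → ℝ) (R : 𝒳 → 𝒮 → 𝒴 → ℝ) (s : 𝒮)
    (hs : 0 < margS P s) (g : 𝒴 → ℝ) :
    margS P s * TV (condYhatS P R s) g
      = TV (fun y => jointYhatS P R y s) (fun y => margS P s * g y) := by
  rw [← TV_smul (margS P s) hs.le]
  congr 1
  funext y
  unfold condYhatS
  field_simp

set_option maxHeartbeats 1000000 in
/-- **Theorem 4.** In the generalized fair learning problem with the TV-based dependence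
measure, if `φ_L(x,y) ≤ P(x|y,s)/P(x|s) ≤ φ_U(x,y)`, `Δ = φ_U - φ_L` satisfies
`ε/2 ≥ E_{P_X P_{Y|S=s_max}}[Δ]`, and `P_S(s_max) = 1/2 + δ` with `δ > 0`, then any
optimal solution among rules with `ρ_TV(Ŷ, S) ≤ ε` satisfies
`E_{s∼P_S}[TV(P_{Ŷ|S=s}, P_{Y|S=s_max})] ≤ 2ε (1 + 1/(2δ))`. -/
theorem generalized_rhoTV_fair_optimal_inductive_bias
    (P : 𝒳 → 𝒴 → 𝒮 → ℝ)
    (hP0 : ∀ x y s, 0 ≤ P x y s)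
    (hP1 : ∑ x, ∑ y, ∑ s, P x y s = 1)
    (hXS : ∀ x s, 0 < margXS P x s)
    (hYS : ∀ y s, 0 < margYS P y s)
    (φL φU : 𝒳 → 𝒴 → ℝ)
    (hL : ∀ x y s, φL x y ≤ condRatio P x y s)
    (hU : ∀ x y s, condRatio P x y s ≤ φU x y)
    (smax : 𝒮) (δ : ℝ) (hδ : 0 < δ) (hsmax : margS P smax = 1 / 2 + δ)
    (ε : ℝ)
    (hΔ : ∑ x, ∑ y, margX P x * condYS P smax y * (φU x y - φL x y) ≤ ε / 2)
    (Q : 𝒳 → 𝒮 → 𝒴 → ℝ) (hQ : IsRule Q)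
    (hfair : rhoTV P Q ≤ ε)
    (hopt : ∀ Q' : 𝒳 → 𝒮 → 𝒴 → ℝ, IsRule Q' → rhoTV P Q' ≤ ε →
      objective P Q ≤ objective P Q') :
    ∑ s, margS P s * TV (condYhatS P Q s) (condYS P smax)
      ≤ 2 * ε * (1 + 1 / (2 * δ)) := by
  classical
  -- Basic positivity and normalization facts
  have hNX : Nonempty 𝒳 := by
    by_contra h
    rw [not_nonempty_iff] at h
    have h0 : margS P smax = 0 := by simp [margS]
    rw [hsmax] at h0; linarith
  have hS0 : ∀ s, 0 < margS P s := fun s =>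
    Finset.sum_pos (fun x _ => hXS x s) Finset.univ_nonempty
  have hSne : ∀ s, margS P s ≠ 0 := fun s => (hS0 s).ne'
  have hXSne : ∀ x s, margXS P x s ≠ 0 := fun x s => (hXS x s).ne'
  have hYSne : ∀ y s, margYS P y s ≠ 0 := fun y s => (hYS y s).ne'
  have hSsum : ∑ s, margS P s = 1 := by
    have h1 : ∑ s, margS P s = ∑ x, ∑ y, ∑ s, P x y s := by
      simp only [margS, margXS]
      rw [Finset.sum_comm]
      exact Finset.sum_congr rfl fun x _ => Finset.sum_comm
    rw [h1, hP1]
  have hYc0 : ∀ s y, 0 < condYS P s y := fun s y => div_pos (hYS y s) (hS0 s)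
  have hr0 : ∀ x y s, 0 ≤ condRatio P x y s := fun x y s =>
    div_nonneg (div_nonneg (hP0 x y s) (hYS y s).le)
      (div_nonneg (hXS x s).le (hS0 s).le)
  have hcondYXSsum : ∀ x s, ∑ y, condYXS P x s y = 1 := by
    intro x s
    unfold condYXS
    rw [← Finset.sum_div]
    exact div_self (hXSne x s)
  have hpt1 : ∀ x y s, margXS P x s * condRatio P x y s
      = P x y s * (margS P s / margYS P y s) := by
    intro x y s
    unfold condRatio
    field_simp [hXSne x s, hYSne y s, hSne s]
  have hpt2 : ∀ x y s, condYS P s y * condRatio P x y s = condYXS P x s y := by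
    intro x y s
    unfold condYS condRatio condYXS
    field_simp [hXSne x s, hYSne y s, hSne s]
  have hI1 : ∀ y s, ∑ x, margXS P x s * condRatio P x y s = margS P s := by
    intro y s
    simp only [hpt1]
    rw [← Finset.sum_mul]
    have : (∑ x, P x y s) = margYS P y s := rfl
    rw [this, ← mul_div_assoc]
    exact mul_div_cancel_left₀ _ (hYSne y s)
  have hI3 : ∀ x s, ∑ y, condYS P s y * condRatio P x y s = 1 := by
    intro x s
    simp only [hpt2]
    exact hcondYXSsum x s
  -- The candidate rule
  set D : 𝒳 → ℝ := fun x => ∑ y, condYS P smax y * (φU x y - φL x y) with hDdef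
  set q2 : 𝒳 → 𝒮 → 𝒴 → ℝ := fun x s y => condYS P smax y * condRatio P x y s with hq2def
  set c : 𝒳 → 𝒮 → ℝ := fun x s => ∑ y, q2 x s y with hcdef
  set Qc : 𝒳 → 𝒮 → 𝒴 → ℝ := fun x s y => q2 x s y / c x s with hQcdef
  have hq20 : ∀ x s y, 0 ≤ q2 x s y := fun x s y =>
    mul_nonneg (hYc0 smax y).le (hr0 x y s)
  have hΔ0 : ∀ x y, 0 ≤ φU x y - φL x y := fun x y => by
    have := hL x y smax; have := hU x y smax; linarith
  have hD0 : ∀ x, 0 ≤ D x := fun x =>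
    Finset.sum_nonneg fun y _ => mul_nonneg (hYc0 smax y).le (hΔ0 x y)
  have hc0 : ∀ x s, 0 < c x s := by
    intro x s
    have h1 := hI3 x s
    have hex : ∃ y, 0 < condRatio P x y s := by
      by_contra h
      push_neg at h
      have hz : ∀ y, condRatio P x y s = 0 := fun y => le_antisymm (h y) (hr0 x y s)
      simp only [hz, mul_zero, Finset.sum_const_zero] at h1
      norm_num at h1
    obtain ⟨y, hy⟩ := hex
    have hterm : 0 < q2 x s y := mul_pos (hYc0 smax y) hy
    exact lt_of_lt_of_le hterm (Finset.single_le_sum (fun y _ => hq20 x s y) (mem_univ y))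
  have hc1 : ∀ x s, |c x s - 1| ≤ D x := by
    intro x s
    have e0 : ∑ y, condYS P smax y * (condRatio P x y s - condRatio P x y smax)
        = c x s - 1 := by
      simp only [mul_sub]
      rw [Finset.sum_sub_distrib, hI3 x smax]
    rw [← e0]
    refine (Finset.abs_sum_le_sum_abs _ _).trans ?_
    refine Finset.sum_le_sum fun y _ => ?_
    rw [abs_mul, abs_of_nonneg (hYc0 smax y).le]
    refine mul_le_mul_of_nonneg_left ?_ (hYc0 smax y).le
    rw [abs_sub_le_iff]
    constructor
    · have := hU x y s; have := hL x y smax; linarith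
    · have := hU x y smax; have := hL x y s; linarith
  have hQcRule : IsRule Qc := by
    constructor
    · intro x s y
      exact div_nonneg (hq20 x s y) (hc0 x s).le
    · intro x s
      show (∑ y, q2 x s y / c x s) = 1
      rw [← Finset.sum_div]
      exact div_self (hc0 x s).ne'
  -- TV between Qc and q2
  have hTVQcq2 : ∀ x s, TV (Qc x s) (q2 x s) ≤ D x / 2 := by
    intro x s
    have hy : ∀ y, |Qc x s y - q2 x s y| = q2 x s y * (|c x s - 1| / c x s) := by
      intro y
      show |q2 x s y / c x s - q2 x s y| = _
      rw [show q2 x s y / c x s - q2 x s y = q2 x s y * ((1 - c x s) / c x s) by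
        field_simp [(hc0 x s).ne']]
      rw [abs_mul, abs_of_nonneg (hq20 x s y), abs_div, abs_of_pos (hc0 x s),
        abs_sub_comm]
    show (1/2 : ℝ) * ∑ y, |Qc x s y - q2 x s y| ≤ D x / 2
    simp only [hy]
    rw [← Finset.sum_mul]
    have hsum : (∑ y, q2 x s y) = c x s := rfl
    rw [hsum, mul_comm (c x s), div_mul_cancel₀ _ (hc0 x s).ne']
    have := hc1 x s
    linarith
  -- hypothesis hΔ repackaged
  have hmargX0 : ∀ x, 0 ≤ margX P x := fun x =>
    Finset.sum_nonneg fun s _ => (hXS x s).le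
  have hmargD : ∑ x, margX P x * D x ≤ ε / 2 := by
    calc ∑ x, margX P x * D x
        = ∑ x, ∑ y, margX P x * condYS P smax y * (φU x y - φL x y) := by
          refine Finset.sum_congr rfl fun x _ => ?_
          rw [hDdef, Finset.mul_sum]
          exact Finset.sum_congr rfl fun y _ => by ring
      _ ≤ ε / 2 := hΔ
  have hε0 : 0 ≤ ε := by
    have h1 : 0 ≤ ∑ x, margX P x * D x :=
      Finset.sum_nonneg fun x _ => mul_nonneg (hmargX0 x) (hD0 x)
    linarith
  have hEs : ∑ s, ∑ x, margXS P x s * (D x / 2) ≤ ε / 4 := by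
    rw [Finset.sum_comm]
    have h1 : ∀ x, ∑ s, margXS P x s * (D x / 2) = margX P x * D x / 2 := by
      intro x
      rw [← Finset.sum_mul]
      show margX P x * (D x / 2) = _
      ring
    simp only [h1]
    rw [← Finset.sum_div]
    linarith
  -- Feasibility of Qc: per-group closeness to condYS smax
  have hQcclose : ∀ s, margS P s * TV (condYhatS P Qc s) (condYS P smax)
      ≤ ∑ x, margXS P x s * (D x / 2) := by
    intro s
    rw [margS_mul_TV_condYhatS P Qc s (hS0 s)]
    have h2 : (fun y => margS P s * condYS P smax y)
        = fun y => ∑ x, margXS P x s * q2 x s y := by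
      funext y
      show margS P s * condYS P smax y
          = ∑ x, margXS P x s * (condYS P smax y * condRatio P x y s)
      rw [show (∑ x, margXS P x s * (condYS P smax y * condRatio P x y s))
          = condYS P smax y * ∑ x, margXS P x s * condRatio P x y s by
        rw [Finset.mul_sum]; exact Finset.sum_congr rfl fun x _ => by ring]
      rw [hI1 y s]
      ring
    rw [h2]
    have h1 : (fun y => jointYhatS P Qc y s) = fun y => ∑ x, margXS P x s * Qc x s y := rfl
    rw [h1]
    refine (TV_mix (fun x => margXS P x s) (fun x => (hXS x s).le)
      (fun x => Qc x s) (fun x => q2 x s)).trans ?_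
    exact Finset.sum_le_sum fun x _ =>
      mul_le_mul_of_nonneg_left (hTVQcq2 x s) (hXS x s).le
  have hαsum : ∑ s, margS P s * TV (condYhatS P Qc s) (condYS P smax) ≤ ε / 4 :=
    le_trans (Finset.sum_le_sum fun s _ => hQcclose s) hEs
  -- Feasibility of Qc
  have hfeasQc : rhoTV P Qc ≤ ε := by
    have hm : TV (condYS P smax) (margYhat P Qc)
        ≤ ∑ s, margS P s * TV (condYS P smax) (condYhatS P Qc s) := by
      have h1 : condYS P smax = fun y => ∑ s, margS P s * condYS P smax y := by
        funext y
        rw [← Finset.sum_mul, hSsum, one_mul]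
      have h2 : margYhat P Qc = fun y => ∑ s, margS P s * condYhatS P Qc s y := by
        funext y
        unfold margYhat
        refine Finset.sum_congr rfl fun s _ => ?_
        unfold condYhatS
        rw [← mul_div_assoc, mul_div_cancel_left₀ _ (hSne s)]
      have hm' : TV (fun y => ∑ s, margS P s * condYS P smax y)
          (fun y => ∑ s, margS P s * condYhatS P Qc s y)
          ≤ ∑ s, margS P s * TV (condYS P smax) (condYhatS P Qc s) :=
        TV_mix (fun s => margS P s) (fun s => (hS0 s).le)
          (fun _ => condYS P smax) (fun s => condYhatS P Qc s)
      exact (congrArg₂ TV h1 h2).trans_le hm'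
    have hm2 : TV (condYS P smax) (margYhat P Qc) ≤ ε / 4 := by
      refine hm.trans ?_
      refine le_trans (le_of_eq ?_) hαsum
      exact Finset.sum_congr rfl fun s _ => by rw [TV_symm]
    unfold rhoTV
    have h3 : ∀ s, margS P s * TV (condYhatS P Qc s) (margYhat P Qc)
        ≤ margS P s * TV (condYhatS P Qc s) (condYS P smax)
          + margS P s * TV (condYS P smax) (margYhat P Qc) := by
      intro s
      rw [← mul_add]
      exact mul_le_mul_of_nonneg_left (TV_triangle _ _ _) (hS0 s).le
    refine le_trans (Finset.sum_le_sum fun s _ => h3 s) ?_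
    rw [Finset.sum_add_distrib, ← Finset.sum_mul, hSsum, one_mul]
    linarith
  -- Objective of Qc is at most B + ε/4
  have hq2TV : ∀ s, ∑ x, margXS P x s * TV (q2 x s) (condYXS P x s)
      = margS P s * TV (condYS P s) (condYS P smax) := by
    intro s
    have e : ∀ x, TV (q2 x s) (condYXS P x s)
        = (1/2) * ∑ y, condRatio P x y s * |condYS P smax y - condYS P s y| := by
      intro x
      show (1/2 : ℝ) * ∑ y, |q2 x s y - condYXS P x s y| = _
      congr 1
      refine Finset.sum_congr rfl fun y _ => ?_
      rw [← hpt2 x y s]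
      show |condYS P smax y * condRatio P x y s - condYS P s y * condRatio P x y s| = _
      rw [show condYS P smax y * condRatio P x y s - condYS P s y * condRatio P x y s
          = condRatio P x y s * (condYS P smax y - condYS P s y) by ring]
      rw [abs_mul, abs_of_nonneg (hr0 x y s)]
    simp only [e]
    calc ∑ x, margXS P x s * ((1/2) * ∑ y, condRatio P x y s * |condYS P smax y - condYS P s y|)
        = ∑ x, ∑ y, (1/2) * (margXS P x s * condRatio P x y s
            * |condYS P smax y - condYS P s y|) := by
          refine Finset.sum_congr rfl fun x _ => ?_
          rw [Finset.mul_sum, Finset.mul_sum]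
          exact Finset.sum_congr rfl fun y _ => by ring
      _ = ∑ y, (1/2) * (margS P s * |condYS P smax y - condYS P s y|) := by
          rw [Finset.sum_comm]
          refine Finset.sum_congr rfl fun y _ => ?_
          rw [show ∀ z : ℝ, (∑ x, (1/2) * (margXS P x s * condRatio P x y s * z))
              = (1/2) * ((∑ x, margXS P x s * condRatio P x y s) * z) from fun z => by
            rw [Finset.sum_mul, Finset.mul_sum]]
          rw [hI1 y s]
      _ = margS P s * TV (condYS P s) (condYS P smax) := by
          unfold TV
          rw [Finset.mul_sum, Finset.mul_sum]
          exact Finset.sum_congr rfl fun y _ => by rw [abs_sub_comm]; ring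
  have hobjQc : objective P Qc
      ≤ (∑ s, margS P s * TV (condYS P s) (condYS P smax)) + ε / 4 := by
    unfold objective
    rw [Finset.sum_comm]
    have hterm : ∀ s, ∑ x, margXS P x s * TV (Qc x s) (condYXS P x s)
        ≤ margS P s * TV (condYS P s) (condYS P smax)
          + ∑ x, margXS P x s * (D x / 2) := by
      intro s
      have h1 : ∑ x, margXS P x s * TV (Qc x s) (condYXS P x s)
          ≤ ∑ x, margXS P x s * (TV (q2 x s) (condYXS P x s) + TV (Qc x s) (q2 x s)) := by
        refine Finset.sum_le_sum fun x _ => mul_le_mul_of_nonneg_left ?_ (hXS x s).le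
        have := TV_triangle (Qc x s) (q2 x s) (condYXS P x s)
        have hsymm := TV_symm (Qc x s) (q2 x s)
        linarith
      refine h1.trans ?_
      have h2 : ∑ x, margXS P x s * (TV (q2 x s) (condYXS P x s) + TV (Qc x s) (q2 x s))
          = (∑ x, margXS P x s * TV (q2 x s) (condYXS P x s))
            + ∑ x, margXS P x s * TV (Qc x s) (q2 x s) := by
        rw [← Finset.sum_add_distrib]
        exact Finset.sum_congr rfl fun x _ => by ring
      rw [h2, hq2TV s]
      have h3 : ∑ x, margXS P x s * TV (Qc x s) (q2 x s)
          ≤ ∑ x, margXS P x s * (D x / 2) :=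
        Finset.sum_le_sum fun x _ =>
          mul_le_mul_of_nonneg_left (hTVQcq2 x s) (hXS x s).le
      linarith
    refine le_trans (Finset.sum_le_sum fun s _ => hterm s) ?_
    rw [Finset.sum_add_distrib]
    linarith [hEs]
  -- Lower bound on the objective of Q
  have hAlow : ∀ s (g : 𝒴 → ℝ), (∀ y, margS P s * g y = ∑ x, margXS P x s * condYXS P x s y) →
      margS P s * TV (condYhatS P Q s) g
        ≤ ∑ x, margXS P x s * TV (Q x s) (condYXS P x s) := by
    intro s g hg
    rw [margS_mul_TV_condYhatS P Q s (hS0 s)]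
    have h2 : (fun y => margS P s * g y) = fun y => ∑ x, margXS P x s * condYXS P x s y := by
      funext y; exact hg y
    rw [h2]
    exact TV_mix (fun x => margXS P x s) (fun x => (hXS x s).le)
      (fun x => Q x s) (fun x => condYXS P x s)
  have hgS : ∀ s y, margS P s * condYS P s y = ∑ x, margXS P x s * condYXS P x s y := by
    intro s y
    have h1 : ∀ x, margXS P x s * condYXS P x s y = P x y s := by
      intro x; unfold condYXS; rw [← mul_div_assoc, mul_div_cancel_left₀ _ (hXSne x s)]
    simp only [h1]
    show margS P s * (margYS P y s / margS P s) = ∑ x, P x y s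
    rw [← mul_div_assoc, mul_div_cancel_left₀ _ (hSne s)]
    rfl
  have hAs : ∀ s, margS P s * TV (condYhatS P Q s) (condYS P s)
      ≤ ∑ x, margXS P x s * TV (Q x s) (condYXS P x s) :=
    fun s => hAlow s (condYS P s) (hgS s)
  -- Abbreviations
  set Tv : ℝ := TV (condYhatS P Q smax) (condYS P smax) with hTdef
  set Lv : ℝ := ∑ s, margS P s * TV (condYhatS P Q s) (condYS P smax) with hLdef
  set Bv : ℝ := ∑ s, margS P s * TV (condYS P s) (condYS P smax) with hBdef
  have hTv0 : 0 ≤ Tv := TV_nonneg _ _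
  -- obj(Q) ≥ 2 P_S(smax) T + B - L
  have hobjQ_ge : 2 * margS P smax * Tv + Bv - Lv ≤ objective P Q := by
    have hobjS : objective P Q = ∑ s, ∑ x, margXS P x s * TV (Q x s) (condYXS P x s) := by
      unfold objective; exact Finset.sum_comm
    rw [hobjS, ← Finset.add_sum_erase _ _ (mem_univ smax)]
    have hAe : ∀ s, margS P s * TV (condYS P s) (condYS P smax)
          - margS P s * TV (condYhatS P Q s) (condYS P smax)
        ≤ ∑ x, margXS P x s * TV (Q x s) (condYXS P x s) := by
      intro s
      refine le_trans ?_ (hAs s)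
      rw [← mul_sub]
      refine mul_le_mul_of_nonneg_left ?_ (hS0 s).le
      have h1 := TV_triangle (condYS P s) (condYhatS P Q s) (condYS P smax)
      have h2 := TV_symm (condYS P s) (condYhatS P Q s)
      linarith
    have hsum_e : ∑ s ∈ univ.erase smax, (margS P s * TV (condYS P s) (condYS P smax)
          - margS P s * TV (condYhatS P Q s) (condYS P smax))
        ≤ ∑ s ∈ univ.erase smax, ∑ x, margXS P x s * TV (Q x s) (condYXS P x s) :=
      Finset.sum_le_sum fun s _ => hAe s
    have he1 : ∑ s ∈ univ.erase smax, margS P s * TV (condYS P s) (condYS P smax)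
        = Bv - margS P smax * TV (condYS P smax) (condYS P smax) :=
      Finset.sum_erase_eq_sub (mem_univ smax)
    have he2 : ∑ s ∈ univ.erase smax, margS P s * TV (condYhatS P Q s) (condYS P smax)
        = Lv - margS P smax * Tv :=
      Finset.sum_erase_eq_sub (mem_univ smax)
    rw [Finset.sum_sub_distrib, he1, he2, TV_self] at hsum_e
    have hAsmax : margS P smax * Tv
        ≤ ∑ x, margXS P x smax * TV (Q x smax) (condYXS P x smax) := hAs smax
    linarith
  -- L ≤ ε + T
  have hLle : Lv ≤ ε + Tv := by
    have hρ0 : ∀ s, 0 ≤ TV (condYhatS P Q s) (margYhat P Q) := fun s => TV_nonneg _ _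
    have htris : ∀ s, TV (condYhatS P Q s) (condYS P smax)
        ≤ TV (condYhatS P Q s) (margYhat P Q)
          + (TV (condYhatS P Q smax) (margYhat P Q) + Tv) := by
      intro s
      have h1 := TV_triangle (condYhatS P Q s) (margYhat P Q) (condYS P smax)
      have h2 := TV_triangle (margYhat P Q) (condYhatS P Q smax) (condYS P smax)
      have h3 := TV_symm (margYhat P Q) (condYhatS P Q smax)
      rw [hTdef]
      linarith
    have hLsplit : Lv = margS P smax * Tv
        + ∑ s ∈ univ.erase smax, margS P s * TV (condYhatS P Q s) (condYS P smax) := by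
      rw [hLdef, ← Finset.add_sum_erase _ _ (mem_univ smax)]
    have hsum_e : ∑ s ∈ univ.erase smax, margS P s * TV (condYhatS P Q s) (condYS P smax)
        ≤ ∑ s ∈ univ.erase smax, margS P s * (TV (condYhatS P Q s) (margYhat P Q)
          + (TV (condYhatS P Q smax) (margYhat P Q) + Tv)) :=
      Finset.sum_le_sum fun s _ => mul_le_mul_of_nonneg_left (htris s) (hS0 s).le
    have hdist : ∑ s ∈ univ.erase smax, margS P s * (TV (condYhatS P Q s) (margYhat P Q)
          + (TV (condYhatS P Q smax) (margYhat P Q) + Tv))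
        = (∑ s ∈ univ.erase smax, margS P s * TV (condYhatS P Q s) (margYhat P Q))
          + (∑ s ∈ univ.erase smax, margS P s)
            * (TV (condYhatS P Q smax) (margYhat P Q) + Tv) := by
      rw [Finset.sum_mul, ← Finset.sum_add_distrib]
      exact Finset.sum_congr rfl fun s _ => by ring
    have hρe : ∑ s ∈ univ.erase smax, margS P s * TV (condYhatS P Q s) (margYhat P Q)
        = rhoTV P Q - margS P smax * TV (condYhatS P Q smax) (margYhat P Q) :=
      Finset.sum_erase_eq_sub (mem_univ smax)
    have hme : ∑ s ∈ univ.erase smax, margS P s = 1 - margS P smax := by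
      rw [Finset.sum_erase_eq_sub (mem_univ smax), hSsum]
    rw [hdist, hρe, hme] at hsum_e
    have hρsmax0 := hρ0 smax
    rw [hsmax] at hsum_e
    nlinarith [hsum_e, hLsplit, hfair, hρ0 smax, hTv0, hδ]
  -- Combine everything
  have hopt' := hopt Qc hQcRule hfeasQc
  have hkey : 2 * margS P smax * Tv ≤ Lv + ε / 4 := by
    rw [hBdef] at hobjQ_ge
    linarith [hobjQ_ge, hobjQc, hopt']
  rw [hsmax] at hkey
  have h2δ : 2 * δ * Tv ≤ (5/4) * ε := by linarith [hkey, hLle]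
  have hgoal2 : 2 * ε * (1 + 1 / (2 * δ)) = 2 * ε + ε / δ := by
    field_simp
  rw [hgoal2]
  have hTb : Tv ≤ ε + ε / δ := by
    have h1 : Tv ≤ (5/8) * (ε / δ) := by
      rw [show (5/8 : ℝ) * (ε / δ) = (5/8) * ε / δ by ring, le_div_iff₀ hδ]
      linarith
    have h3 : 0 ≤ ε / δ := div_nonneg hε0 hδ.le
    linarith
  linarith [hLle, hTb]
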